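/- Let G = (V,E,ω) be a biconnected weighted graph. If L and L' are both max-constrained book-embeddings of G, then L' = L or L' is the flip of L; that is, the max-constrained book-embedding of a biconnected weighted graph is unique up to a flip. -/

import Mathlib

namespace Schematic

/-- A 1-page book-embedding of `G`: vertices are linearly ordered via an injective
real-valued placement `f`, and no two edges cross. -/
def IsBE {V : Type*} (G : SimpleGraph V) (f : V → ℝ) : Prop :=
  Function.Injective f ∧
  ∀ a b c d : V, G.Adj a b → G.Adj c d → ¬ (f a < f c ∧ f c < f b ∧ f b < f d)

/-- Edge `(u,v)` wraps around edge `(w,z)` (equivalently, `(w,z)` is nested into `(u,v)`),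
where `(w,z)` is written in increasing order. -/
def Wraps {V : Type*} (G : SimpleGraph V) (f : V → ℝ) (u v w z : V) : Prop :=
  G.Adj u v ∧ G.Adj w z ∧ s(u, v) ≠ s(w, z) ∧
  f u ≤ f w ∧ f w < f z ∧ f z ≤ f v

/-- A max-constrained book-embedding: whenever an edge wraps around another edge,
the outer edge has strictly larger weight. -/
def IsMaxBE {V : Type*} (G : SimpleGraph V) (ω : V → V → ℝ) (f : V → ℝ) : Prop :=
  IsBE G f ∧ ∀ u v w z : V, Wraps G f u v w z → ω w z < ω u v

/-- A graph is biconnected if it has at least 3 vertices, is connected,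
and deleting any single vertex leaves a connected graph. -/
def IsBiconnected {V : Type*} (G : SimpleGraph V) : Prop :=
  3 ≤ Nat.card V ∧ G.Connected ∧
  ∀ v : V, (G.induce (({v} : Set V)ᶜ)).Connected

section Aux

variable {V : Type*}

/-- Along a walk from a vertex satisfying `P` to one not satisfying `P`,
there is an edge leaving `P`. -/
lemma exists_boundary {G : SimpleGraph V} {P : V → Prop} :
    ∀ {a b : V}, G.Walk a b → P a → ¬ P b → ∃ x y, G.Adj x y ∧ P x ∧ ¬ P y := by
  intro a b w
  induction w with
  | nil => intro ha hb; exact absurd ha hb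
  | @cons u x c h p ih =>
    intro ha hb
    by_cases hx : P x
    · exact ih hx hb
    · exact ⟨u, x, h, ha, hx⟩

/-- Non-crossing condition for a graph w.r.t. a placement. -/
def NC (G : SimpleGraph V) (g : V → ℝ) : Prop :=
  ∀ a b c d : V, G.Adj a b → G.Adj c d → ¬ (g a < g c ∧ g c < g b ∧ g b < g d)

/-- `u` is the immediate predecessor of `v` in the `g`-order. -/
def Consec (g : V → ℝ) (u v : V) : Prop :=
  g u < g v ∧ ∀ z, ¬ (g u < g z ∧ g z < g v)

def IsMinOf (g : V → ℝ) (m : V) : Prop := ∀ z, g m ≤ g z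
def IsMaxOf (g : V → ℝ) (M : V) : Prop := ∀ z, g z ≤ g M

open scoped Classical in
/-- set of vertices strictly below `u` in the `h`-order -/
noncomputable def bl [Fintype V] (h : V → ℝ) (u : V) : Finset V :=
  Finset.univ.filter (fun z => h z < h u)

lemma mem_bl [Fintype V] {h : V → ℝ} {u z : V} : z ∈ bl h u ↔ h z < h u := by
  simp [bl]

open scoped Classical in
lemma bl_insert [Fintype V] {h : V → ℝ} (hinj : Function.Injective h) {p u : V}
    (hc : Consec h p u) : bl h u = insert p (bl h p) := by
  ext z
  simp only [mem_bl, Finset.mem_insert]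
  constructor
  · intro hz
    rcases lt_trichotomy (h z) (h p) with h1 | h1 | h1
    · exact Or.inr h1
    · exact Or.inl (hinj h1)
    · exact absurd ⟨h1, hz⟩ (hc.2 z)
  · rintro (rfl | hz)
    · exact hc.1
    · exact hz.trans hc.1

open scoped Classical in
lemma exists_pred [Fintype V] {g : V → ℝ} (hg : Function.Injective g) {v : V}
    (hne : (bl g v).Nonempty) :
    ∃ p, Consec g p v ∧ (bl g p).card + 1 = (bl g v).card := by
  obtain ⟨p, hp, hpmax⟩ := Finset.exists_max_image _ g hne
  have hp' : g p < g v := mem_bl.mp hp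
  have hcons : Consec g p v :=
    ⟨hp', fun z hz => absurd (hpmax z (mem_bl.mpr hz.2)) (not_le.mpr hz.1)⟩
  refine ⟨p, hcons, ?_⟩
  rw [bl_insert hg hcons,
    Finset.card_insert_of_notMem (fun h => lt_irrefl _ (mem_bl.mp h))]

/-- Lemma 1a: in a book-embedding of a biconnected graph, consecutive vertices
are adjacent. -/
lemma consec_adj [Fintype V] {G : SimpleGraph V} {g : V → ℝ}
    (hg : Function.Injective g) (hnc : NC G g)
    (hconn : G.Connected) (hdel : ∀ x : V, (G.induce (({x} : Set V)ᶜ)).Connected)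
    {u v : V} (huv : Consec g u v) : G.Adj u v := by
  classical
  by_contra hadj
  obtain ⟨hlt, hgap⟩ := huv
  have hgap' : ∀ z, g u < g z → g v ≤ g z := fun z hz =>
    le_of_not_gt (fun h => hgap z ⟨hz, h⟩)
  -- a cut edge exists
  obtain ⟨w⟩ := hconn.preconnected u v
  obtain ⟨x0, y0, hxy0, hx0, hy0⟩ :=
    exists_boundary (P := fun z => g z ≤ g u) w le_rfl (not_le.mpr hlt)
  have hy0' : g v ≤ g y0 := hgap' y0 (lt_of_not_ge hy0)
  -- maximal left endpoint
  set lefts := Finset.univ.filter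
    (fun a => g a ≤ g u ∧ ∃ b, G.Adj a b ∧ g v ≤ g b) with hlefts
  have hlne : lefts.Nonempty := ⟨x0, by
    simp only [hlefts, Finset.mem_filter, Finset.mem_univ, true_and]
    exact ⟨hx0, y0, hxy0, hy0'⟩⟩
  obtain ⟨a, hamem, hamax⟩ := Finset.exists_max_image lefts g hlne
  simp only [hlefts, Finset.mem_filter, Finset.mem_univ, true_and] at hamem
  obtain ⟨hau, b0, hab0, hvb0⟩ := hamem
  have hamax' : ∀ c, g c ≤ g u → (∃ d, G.Adj c d ∧ g v ≤ g d) → g c ≤ g a := by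
    intro c h1 h2
    exact hamax c (by
      simp only [hlefts, Finset.mem_filter, Finset.mem_univ, true_and]
      exact ⟨h1, h2⟩)
  -- minimal right endpoint among a's neighbours beyond v
  set rts := Finset.univ.filter (fun b => G.Adj a b ∧ g v ≤ g b) with hrts
  have hrne : rts.Nonempty := ⟨b0, by
    simp only [hrts, Finset.mem_filter, Finset.mem_univ, true_and]
    exact ⟨hab0, hvb0⟩⟩
  obtain ⟨b, hbmem, hbmin⟩ := Finset.exists_min_image rts g hrne
  simp only [hrts, Finset.mem_filter, Finset.mem_univ, true_and] at hbmem
  obtain ⟨hab, hvb⟩ := hbmem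
  have hbmin' : ∀ d, G.Adj a d → g v ≤ g d → g b ≤ g d := by
    intro d h1 h2
    exact hbmin d (by
      simp only [hrts, Finset.mem_filter, Finset.mem_univ, true_and]
      exact ⟨h1, h2⟩)
  -- b is minimal among right endpoints of all cut edges
  have key1 : ∀ c d, G.Adj c d → g c ≤ g u → g v ≤ g d → g b ≤ g d := by
    intro c d hcd hcu hvd
    have hcle : g c ≤ g a := hamax' c hcu ⟨d, hcd, hvd⟩
    rcases eq_or_lt_of_le hcle with heq | hlt'
    · exact hbmin' d ((hg heq) ▸ hcd) hvd
    · by_contra hc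
      exact hnc c d a b hcd hab
        ⟨hlt', lt_of_le_of_lt hau (lt_of_lt_of_le hlt hvd), lt_of_not_ge hc⟩
  rcases eq_or_lt_of_le hau with heq | hcase
  · -- the innermost cut edge starts at u itself
    have hua : a = u := hg heq
    have hbv : b ≠ v := by
      intro h
      apply hadj
      rw [← hua, ← h]
      exact hab
    have hvb' : g v < g b := lt_of_le_of_ne hvb (fun h => hbv (hg h.symm))
    have hlt2 : g a < g v := by rw [heq]; exact hlt
    have closure : ∀ z y, (g v ≤ g z ∧ g z < g b) → G.Adj z y → y ≠ b →
        (g v ≤ g y ∧ g y < g b) := by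
      intro z y hz hzy hyb
      obtain ⟨hvz, hzb⟩ := hz
      by_cases h1 : g v ≤ g y
      · refine ⟨h1, ?_⟩
        by_contra hby
        have hby' : g b < g y := lt_of_le_of_ne (not_lt.mp hby) (fun h => hyb (hg h).symm)
        exact hnc a b z y hab hzy ⟨lt_of_lt_of_le hlt2 hvz, hzb, hby'⟩
      · exfalso
        have hyu : g y ≤ g u := le_of_not_gt (fun h => h1 (hgap' y h))
        exact absurd (key1 y z hzy.symm hyu hvz) (not_le.mpr hzb)
    have hvnb : v ∈ ({b} : Set V)ᶜ := Set.mem_compl_singleton_iff.mpr (Ne.symm hbv)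
    have hanb : u ∈ ({b} : Set V)ᶜ :=
      Set.mem_compl_singleton_iff.mpr (fun h => hab.ne (hua.trans h))
    obtain ⟨w'⟩ := (hdel b).preconnected ⟨v, hvnb⟩ ⟨u, hanb⟩
    obtain ⟨x, y, hxy, hx, hy⟩ :=
      exists_boundary (P := fun z : (({b} : Set V)ᶜ : Set V) => g v ≤ g z.1 ∧ g z.1 < g b) w'
        ⟨le_rfl, hvb'⟩ (fun h => absurd h.1 (not_le.mpr hlt))
    exact hy (closure x.1 y.1 hx hxy (Set.mem_compl_singleton_iff.mp y.2))
  · -- the innermost cut edge starts strictly below u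
    have closure : ∀ z y, (g a < g z ∧ g z ≤ g u) → G.Adj z y → y ≠ a →
        (g a < g y ∧ g y ≤ g u) := by
      intro z y hz hzy hya
      obtain ⟨haz, hzu⟩ := hz
      by_cases h1 : g y ≤ g a
      · exfalso
        have h1' : g y < g a := lt_of_le_of_ne h1 (fun h => hya (hg h))
        exact hnc y z a b hzy.symm hab
          ⟨h1', haz, lt_of_le_of_lt hzu (lt_of_lt_of_le hlt hvb)⟩
      · by_cases h2 : g y ≤ g u
        · exact ⟨lt_of_not_ge h1, h2⟩
        · exfalso
          have hvy : g v ≤ g y := hgap' y (lt_of_not_ge h2)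
          exact absurd (hamax' z hzu ⟨y, hzy, hvy⟩) (not_le.mpr haz)
    have huna : u ∈ ({a} : Set V)ᶜ :=
      Set.mem_compl_singleton_iff.mpr (fun h => hcase.ne (congrArg g h).symm)
    have hbna : b ∈ ({a} : Set V)ᶜ :=
      Set.mem_compl_singleton_iff.mpr
        (fun h => absurd ((congrArg g h).symm) (ne_of_lt
          (lt_of_le_of_lt hau (lt_of_lt_of_le hlt hvb))))
    obtain ⟨w'⟩ := (hdel a).preconnected ⟨u, huna⟩ ⟨b, hbna⟩
    obtain ⟨x, y, hxy, hx, hy⟩ :=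
      exists_boundary (P := fun z : (({a} : Set V)ᶜ : Set V) => g a < g z.1 ∧ g z.1 ≤ g u) w'
        ⟨hcase, le_rfl⟩
        (fun h => absurd h.2 (not_le.mpr (lt_of_lt_of_le hlt hvb)))
    exact hy (closure x.1 y.1 hx hxy (Set.mem_compl_singleton_iff.mp y.2))

/-- Lemma 1b: in a book-embedding of a biconnected graph, the extreme vertices
are adjacent. -/
lemma min_max_adj [Fintype V] {G : SimpleGraph V} {g : V → ℝ}
    (hg : Function.Injective g) (hnc : NC G g)
    (hconn : G.Connected) (hdel : ∀ x : V, (G.induce (({x} : Set V)ᶜ)).Connected)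
    {m M : V} (hm : IsMinOf g m) (hM : IsMaxOf g M) (hmM : m ≠ M) : G.Adj m M := by
  classical
  by_contra hadj
  have hmM' : g m < g M := lt_of_le_of_ne (hm M) (fun h => hmM (hg h))
  -- m has a neighbour
  obtain ⟨w⟩ := hconn.preconnected m M
  obtain ⟨x0, y0, hxy0, hx0, hy0⟩ :=
    exists_boundary (P := fun z => z = m) w rfl (fun h => hmM h.symm)
  rw [hx0] at hxy0
  -- take the neighbour of m with largest placement
  set nbrs := Finset.univ.filter (fun z => G.Adj m z) with hnbrs
  have hnne : nbrs.Nonempty := ⟨y0, by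
    simp only [hnbrs, Finset.mem_filter, Finset.mem_univ, true_and]
    exact hxy0⟩
  obtain ⟨b, hbmem, hbmax⟩ := Finset.exists_max_image nbrs g hnne
  simp only [hnbrs, Finset.mem_filter, Finset.mem_univ, true_and] at hbmem
  have hbmax' : ∀ c, G.Adj m c → g c ≤ g b := fun c hc => hbmax c (by
    simp only [hnbrs, Finset.mem_filter, Finset.mem_univ, true_and]
    exact hc)
  have hbM : b ≠ M := fun h => hadj (h ▸ hbmem)
  have hmb : g m < g b := lt_of_le_of_ne (hm b) (fun h => hbmem.ne (hg h))
  have hbM' : g b < g M := lt_of_le_of_ne (hM b) (fun h => hbM (hg h))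
  have closure : ∀ z y, g b < g z → G.Adj z y → y ≠ b → g b < g y := by
    intro z y hz hzy hyb
    by_contra h1
    have h1' : g y < g b := lt_of_le_of_ne (not_lt.mp h1) (fun h => hyb (hg h))
    by_cases hym : y = m
    · subst hym
      exact absurd (hbmax' z hzy.symm) (not_le.mpr hz)
    · have h2 : g m < g y := lt_of_le_of_ne (hm y) (fun h => hym (hg h).symm)
      exact hnc m b y z hbmem hzy.symm ⟨h2, h1', hz⟩
  have hMnb : M ∈ ({b} : Set V)ᶜ := Set.mem_compl_singleton_iff.mpr (fun h => hbM h.symm)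
  have hmnb : m ∈ ({b} : Set V)ᶜ :=
    Set.mem_compl_singleton_iff.mpr (fun h => hmb.ne (congrArg g h))
  obtain ⟨w'⟩ := (hdel b).preconnected ⟨M, hMnb⟩ ⟨m, hmnb⟩
  obtain ⟨x, y, hxy, hx, hy⟩ :=
    exists_boundary (P := fun z : (({b} : Set V)ᶜ : Set V) => g b < g z.1) w'
      hbM' (not_lt.mpr hmb.le)
  exact hy (closure x.1 y.1 hx hxy (Set.mem_compl_singleton_iff.mp y.2))

/-- The standard Hamiltonian cycle determined by a placement `g`. -/
def CG (g : V → ℝ) : SimpleGraph V where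
  Adj u v := u ≠ v ∧ (Consec g u v ∨ Consec g v u ∨
    (IsMinOf g u ∧ IsMaxOf g v) ∨ (IsMinOf g v ∧ IsMaxOf g u))
  symm := by
    constructor
    intro u v h
    exact ⟨Ne.symm h.1, by tauto⟩
  loopless := ⟨fun u h => h.1 rfl⟩

lemma cg_connected [Fintype V] {g : V → ℝ} (hg : Function.Injective g)
    {m : V} (hm : IsMinOf g m) : (CG g).Connected := by
  classical
  have key : ∀ n (v : V), (bl g v).card ≤ n → (CG g).Reachable m v := by
    intro n
    induction n with
    | zero =>
      intro v hv
      have hvm : v = m := by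
        by_contra h
        have hmem : m ∈ bl g v :=
          mem_bl.mpr (lt_of_le_of_ne (hm v) (fun e => h (hg e).symm))
        have := Finset.card_pos.mpr ⟨m, hmem⟩
        omega
      subst hvm
      exact SimpleGraph.Reachable.refl _
    | succ n ih =>
      intro v hv
      by_cases hvm : v = m
      · subst hvm; exact SimpleGraph.Reachable.refl _
      · have hne : (bl g v).Nonempty :=
          ⟨m, mem_bl.mpr (lt_of_le_of_ne (hm v) (fun e => hvm (hg e).symm))⟩
        obtain ⟨p, hcons, hcard'⟩ := exists_pred hg hne
        have hpv : (CG g).Adj p v :=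
          ⟨fun e => hcons.1.ne (congrArg g e), Or.inl hcons⟩
        exact (ih p (by omega)).trans hpv.reachable
  rw [SimpleGraph.connected_iff]
  exact ⟨fun a b => ((key _ a le_rfl).symm.trans (key _ b le_rfl)), ⟨m⟩⟩

open scoped Classical in
lemma cg_induce_reach [Fintype V] {g : V → ℝ} (hg : Function.Injective g) {s : Set V} :
    ∀ n {a b : V} (ha : a ∈ s) (hb : b ∈ s), g a ≤ g b →
      (∀ z, g a ≤ g z → g z ≤ g b → z ∈ s) →
      ((bl g b).filter (fun z => g a ≤ g z)).card ≤ n →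
      ((CG g).induce s).Reachable ⟨a, ha⟩ ⟨b, hb⟩ := by
  intro n
  induction n with
  | zero =>
    intro a b ha hb hab hs hcard
    have hne : a = b := by
      by_contra h
      have hab' : g a < g b := lt_of_le_of_ne hab (fun e => h (hg e))
      have hmem : a ∈ (bl g b).filter (fun z => g a ≤ g z) := by
        simp only [Finset.mem_filter, mem_bl]
        exact ⟨hab', le_rfl⟩
      have := Finset.card_pos.mpr ⟨a, hmem⟩
      omega
    subst hne
    exact SimpleGraph.Reachable.refl _
  | succ n ih =>
    intro a b ha hb hab hs hcard
    by_cases h : a = b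
    · subst h; exact SimpleGraph.Reachable.refl _
    · have hab' : g a < g b := lt_of_le_of_ne hab (fun e => h (hg e))
      have hne : (bl g b).Nonempty := ⟨a, mem_bl.mpr hab'⟩
      obtain ⟨p, hcons, hcard'⟩ := exists_pred hg hne
      have hap : g a ≤ g p := by
        by_contra hc
        exact hcons.2 a ⟨lt_of_not_ge hc, hab'⟩
      have hp_s : p ∈ s := hs p hap hcons.1.le
      have hstep : ((CG g).induce s).Adj ⟨p, hp_s⟩ ⟨b, hb⟩ :=
        ⟨fun e => hcons.1.ne (congrArg g e), Or.inl hcons⟩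
      have hsub : (bl g p).filter (fun z => g a ≤ g z) ⊂
          (bl g b).filter (fun z => g a ≤ g z) := by
        constructor
        · intro z hz
          simp only [Finset.mem_filter, mem_bl] at hz ⊢
          exact ⟨hz.1.trans hcons.1, hz.2⟩
        · intro hcon
          have hpmem : p ∈ (bl g b).filter (fun z => g a ≤ g z) := by
            simp only [Finset.mem_filter, mem_bl]
            exact ⟨hcons.1, hap⟩
          have := hcon hpmem
          simp only [Finset.mem_filter, mem_bl] at this
          exact lt_irrefl _ this.1
      have hclt := Finset.card_lt_card hsub
      exact (ih ha hp_s hap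
        (fun z h1 h2 => hs z h1 (h2.trans hcons.1.le)) (by omega)).trans hstep.reachable

lemma cg_del_connected [Fintype V] {g : V → ℝ} (hg : Function.Injective g)
    (hcard : 3 ≤ Fintype.card V) (x : V) :
    ((CG g).induce (({x} : Set V)ᶜ)).Connected := by
  classical
  have hnon : Nonempty V := Fintype.card_pos_iff.mp (by omega)
  obtain ⟨m, -, hm0⟩ := Finset.exists_min_image Finset.univ g Finset.univ_nonempty
  obtain ⟨M, -, hM0⟩ := Finset.exists_max_image Finset.univ g Finset.univ_nonempty
  have hm : IsMinOf g m := fun z => hm0 z (Finset.mem_univ z)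
  have hM : IsMaxOf g M := fun z => hM0 z (Finset.mem_univ z)
  obtain ⟨a0, b0, hab0⟩ := Fintype.exists_pair_of_one_lt_card (α := V) (by omega)
  have hmM : g m < g M := by
    rcases lt_or_eq_of_le (hm M) with h | h
    · exact h
    · exfalso
      apply hab0
      apply hg
      have h1 := hm a0; have h2 := hM a0; have h3 := hm b0; have h4 := hM b0
      rw [← h] at h2 h4
      linarith
  have hbound : ∀ (a b : V),
      ((bl g b).filter (fun z => g a ≤ g z)).card ≤ Fintype.card V :=
    fun a b => le_of_le_of_eq (Finset.card_le_univ _) Finset.card_univ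
  rw [SimpleGraph.connected_iff]
  by_cases hxm : x = m
  · have hMmem : M ∈ ({x} : Set V)ᶜ :=
      Set.mem_compl_singleton_iff.mpr (fun e => hmM.ne (congrArg g (e.trans hxm)).symm)
    have reach : ∀ (a : V) (ha : a ∈ (({x} : Set V)ᶜ)),
        ((CG g).induce (({x} : Set V)ᶜ)).Reachable ⟨a, ha⟩ ⟨M, hMmem⟩ := by
      intro a ha
      refine cg_induce_reach hg (Fintype.card V) ha hMmem (hM a) ?_ (hbound a M)
      intro z h1 h2
      refine Set.mem_compl_singleton_iff.mpr (fun e => ?_)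
      rw [e, hxm] at h1
      exact Set.mem_compl_singleton_iff.mp ha
        ((hg (le_antisymm (hm a) h1)).symm.trans hxm.symm)
    exact ⟨fun u v => (by
      obtain ⟨a, ha⟩ := u
      obtain ⟨b, hb⟩ := v
      exact (reach a ha).trans (reach b hb).symm), ⟨⟨M, hMmem⟩⟩⟩
  · by_cases hxM : x = M
    · have hmmem : m ∈ ({x} : Set V)ᶜ :=
        Set.mem_compl_singleton_iff.mpr (fun e => hmM.ne (congrArg g (e.trans hxM)))
      have reach : ∀ (a : V) (ha : a ∈ (({x} : Set V)ᶜ)),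
          ((CG g).induce (({x} : Set V)ᶜ)).Reachable ⟨a, ha⟩ ⟨m, hmmem⟩ := by
        intro a ha
        refine (cg_induce_reach hg (Fintype.card V) hmmem ha (hm a) ?_ (hbound m a)).symm
        intro z h1 h2
        refine Set.mem_compl_singleton_iff.mpr (fun e => ?_)
        rw [e, hxM] at h2
        exact Set.mem_compl_singleton_iff.mp ha
          ((hg (le_antisymm (hM a) h2)).trans hxM.symm)
      exact ⟨fun u v => (by
        obtain ⟨a, ha⟩ := u
        obtain ⟨b, hb⟩ := v
        exact (reach a ha).trans (reach b hb).symm), ⟨⟨m, hmmem⟩⟩⟩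
    · have hmmem : m ∈ ({x} : Set V)ᶜ :=
        Set.mem_compl_singleton_iff.mpr (fun e => hxm e.symm)
      have hMmem : M ∈ ({x} : Set V)ᶜ :=
        Set.mem_compl_singleton_iff.mpr (fun e => hxM e.symm)
      have reach : ∀ (a : V) (ha : a ∈ (({x} : Set V)ᶜ)),
          ((CG g).induce (({x} : Set V)ᶜ)).Reachable ⟨a, ha⟩ ⟨m, hmmem⟩ := by
        intro a ha
        by_cases hax : g a < g x
        · refine (cg_induce_reach hg (Fintype.card V) hmmem ha (hm a) ?_ (hbound m a)).symm
          intro z h1 h2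
          refine Set.mem_compl_singleton_iff.mpr (fun e => ?_)
          subst e
          exact absurd (lt_of_le_of_lt h2 hax) (lt_irrefl _)
        · have hax' : g x < g a := by
            rcases lt_or_eq_of_le (not_lt.mp hax) with h | h
            · exact h
            · exact absurd (hg h) (fun e => Set.mem_compl_singleton_iff.mp ha e.symm)
          have r1 : ((CG g).induce (({x} : Set V)ᶜ)).Reachable ⟨a, ha⟩ ⟨M, hMmem⟩ := by
            refine cg_induce_reach hg (Fintype.card V) ha hMmem (hM a) ?_ (hbound a M)
            intro z h1 h2
            refine Set.mem_compl_singleton_iff.mpr (fun e => ?_)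
            subst e
            exact absurd (lt_of_le_of_lt h1 hax') (lt_irrefl _)
          have r2 : ((CG g).induce (({x} : Set V)ᶜ)).Adj ⟨M, hMmem⟩ ⟨m, hmmem⟩ :=
            ⟨fun e => hmM.ne (congrArg g e).symm,
              Or.inr (Or.inr (Or.inr ⟨hm, hM⟩))⟩
          exact r1.trans r2.reachable
      exact ⟨fun u v => (by
        obtain ⟨a, ha⟩ := u
        obtain ⟨b, hb⟩ := v
        exact (reach a ha).trans (reach b hb).symm), ⟨⟨m, hmmem⟩⟩⟩

lemma isMaxBE_neg {G : SimpleGraph V} {ω : V → V → ℝ} {f' : V → ℝ}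
    (hsym : ∀ u v, ω u v = ω v u) (hf' : IsMaxBE G ω f') :
    IsMaxBE G ω (fun v => -(f' v)) := by
  obtain ⟨⟨hinj, hnc⟩, hw⟩ := hf'
  refine ⟨⟨fun a b h => hinj (neg_inj.mp h), ?_⟩, ?_⟩
  · rintro a b c d hab hcd ⟨h1, h2, h3⟩
    simp only [neg_lt_neg_iff] at h1 h2 h3
    exact hnc d c b a hcd.symm hab.symm ⟨h3, h2, h1⟩
  · rintro u v w z ⟨huv, hwz, hne, h1, h2, h3⟩
    simp only [neg_le_neg_iff] at h1 h3
    simp only [neg_lt_neg_iff] at h2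
    have hne' : s(v, u) ≠ s(z, w) := by
      rw [Sym2.eq_swap, @Sym2.eq_swap _ z w]; exact hne
    have := hw v u z w ⟨huv.symm, hwz.symm, hne', h3, h2, h1⟩
    rw [hsym w z, hsym u v]
    exact this

/-- the hinge edge has strictly maximal weight among all edges. -/
lemma hinge_max {G : SimpleGraph V} {ω : V → V → ℝ} {f : V → ℝ}
    (hsym : ∀ u v, ω u v = ω v u) (hf : IsMaxBE G ω f)
    {m M : V} (hm : IsMinOf f m) (hM : IsMaxOf f M) (hmM : G.Adj m M)
    {w z : V} (hwz : G.Adj w z) (hne : s(m, M) ≠ s(w, z)) : ω w z < ω m M := by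
  have hginj := hf.1.1
  rcases lt_or_gt_of_ne (fun h : f w = f z => hwz.ne (hginj h)) with hlt | hgt
  · exact hf.2 m M w z ⟨hmM, hwz, hne, hm w, hlt, hM z⟩
  · have h2 : s(m, M) ≠ s(z, w) := fun h => hne (h.trans Sym2.eq_swap)
    have := hf.2 m M z w ⟨hmM, hwz.symm, h2, hm z, hgt, hM w⟩
    rw [hsym w z]
    exact this

lemma third_elem [Fintype V] (hcard : 3 ≤ Fintype.card V) (m M : V) :
    ∃ z : V, z ≠ m ∧ z ≠ M := by
  classical
  by_contra h
  push_neg at h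
  have hsub : (Finset.univ : Finset V) ⊆ {m, M} := by
    intro z _
    rcases Classical.em (z = m) with h1 | h1
    · simp [h1]
    · simp [h z h1]
  have := Finset.card_le_card hsub
  have h2 : ({m, M} : Finset V).card ≤ 2 :=
    (Finset.card_insert_le _ _).trans (by simp)
  simp only [Finset.card_univ] at this
  omega

/-- Main auxiliary lemma: if the two max-constrained book-embeddings share the
same minimal vertex, their orders coincide. -/
lemma aux_same_min [Fintype V] {G : SimpleGraph V} {ω : V → V → ℝ}
    (hsym : ∀ u v, ω u v = ω v u) (hbi : IsBiconnected G)
    {f f' : V → ℝ} (hf : IsMaxBE G ω f) (hf' : IsMaxBE G ω f')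
    {m : V} (hm : IsMinOf f m) (hm' : IsMinOf f' m) :
    ∀ u v : V, f u < f v ↔ f' u < f' v := by
  classical
  have hfin : Function.Injective f := hf.1.1
  have hfin' : Function.Injective f' := hf'.1.1
  have hcard : 3 ≤ Fintype.card V := by
    rw [← Nat.card_eq_fintype_card]; exact hbi.1
  have hnon : Nonempty V := Fintype.card_pos_iff.mp (by omega)
  obtain ⟨M, -, hM0⟩ := Finset.exists_max_image Finset.univ f Finset.univ_nonempty
  obtain ⟨M', -, hM0'⟩ := Finset.exists_max_image Finset.univ f' Finset.univ_nonempty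
  have hM : IsMaxOf f M := fun z => hM0 z (Finset.mem_univ z)
  have hMf' : IsMaxOf f' M' := fun z => hM0' z (Finset.mem_univ z)
  obtain ⟨a0, b0, hab0⟩ := Fintype.exists_pair_of_one_lt_card (α := V) (by omega)
  have hmM : m ≠ M := by
    intro h
    apply hab0
    apply hfin
    have h1 := hm a0; have h2 := hM a0; have h3 := hm b0; have h4 := hM b0
    rw [h] at h1 h3
    linarith
  have hmM' : m ≠ M' := by
    intro h
    apply hab0
    apply hfin'
    have h1 := hm' a0; have h2 := hMf' a0; have h3 := hm' b0; have h4 := hMf' b0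
    rw [h] at h1 h3
    linarith
  have hGmM : G.Adj m M := min_max_adj hfin hf.1.2 hbi.2.1 hbi.2.2 hm hM hmM
  have hGmM' : G.Adj m M' := min_max_adj hfin' hf'.1.2 hbi.2.1 hbi.2.2 hm' hMf' hmM'
  -- the two hinges coincide
  have hMM' : M' = M := by
    by_contra h
    have hno : s(m, M) ≠ s(m, M') := by
      intro hcontra
      rcases Sym2.eq_iff.mp hcontra with ⟨-, e⟩ | ⟨e, -⟩
      · exact h e.symm
      · exact hmM' e
    have h1 := hinge_max hsym hf hm hM hGmM hGmM' hno
    have h2 := hinge_max hsym hf' hm' hMf' hGmM' hGmM (Ne.symm hno)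
    linarith
  rw [hMM'] at hMf' hGmM'
  -- the cycle graph of f' is a subgraph of G
  have hsub : ∀ a b, (CG f').Adj a b → G.Adj a b := by
    rintro a b ⟨hne, hc⟩
    rcases hc with h | h | ⟨h1, h2⟩ | ⟨h1, h2⟩
    · exact consec_adj hfin' hf'.1.2 hbi.2.1 hbi.2.2 h
    · exact (consec_adj hfin' hf'.1.2 hbi.2.1 hbi.2.2 h).symm
    · have ha : a = m := hfin' (le_antisymm (h1 m) (hm' a))
      have hb : b = M := hfin' (le_antisymm (hMf' b) (h2 M))
      rw [ha, hb]
      exact hGmM'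
    · have ha : a = M := hfin' (le_antisymm (hMf' a) (h2 M))
      have hb : b = m := hfin' (le_antisymm (h1 m) (hm' b))
      rw [ha, hb]
      exact hGmM'.symm
  have hnc2 : NC (CG f') f := fun a b c d h1 h2 =>
    hf.1.2 a b c d (hsub _ _ h1) (hsub _ _ h2)
  have hcgconn : (CG f').Connected := cg_connected hfin' hm'
  have hcgdel := cg_del_connected (g := f') hfin' hcard
  -- every f-consecutive pair is f'-consecutive (in one of the two directions)
  have key : ∀ p u, Consec f p u → Consec f' p u ∨ Consec f' u p := by
    intro p u hc
    have hadj : (CG f').Adj p u := consec_adj hfin hnc2 hcgconn hcgdel hc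
    rcases hadj.2 with h | h | ⟨h1, h2⟩ | ⟨h1, h2⟩
    · exact Or.inl h
    · exact Or.inr h
    · exfalso
      have hp : p = m := hfin' (le_antisymm (h1 m) (hm' p))
      have hu : u = M := hfin' (le_antisymm (hMf' u) (h2 M))
      obtain ⟨z, hz1, hz2⟩ := third_elem hcard m M
      rw [hp, hu] at hc
      exact hc.2 z ⟨lt_of_le_of_ne (hm z) (fun h => hz1 (hfin h).symm),
        lt_of_le_of_ne (hM z) (fun h => hz2 (hfin h))⟩
    · exfalso
      have hu : u = m := hfin' (le_antisymm (h1 m) (hm' u))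
      rw [hu] at hc
      exact absurd hc.1 (not_lt.mpr (hm p))
  -- the sets of smaller vertices coincide, by induction
  have hbase' : bl f m = bl f' m := by
    have h1 : bl f m = ∅ := Finset.eq_empty_iff_forall_notMem.mpr
      (fun z hz => absurd (mem_bl.mp hz) (not_lt.mpr (hm z)))
    have h2 : bl f' m = ∅ := Finset.eq_empty_iff_forall_notMem.mpr
      (fun z hz => absurd (mem_bl.mp hz) (not_lt.mpr (hm' z)))
    rw [h1, h2]
  have step : ∀ n, ∀ u : V, (bl f u).card ≤ n → bl f u = bl f' u := by
    intro n
    induction n with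
    | zero =>
      intro u hu
      have hum : u = m := by
        by_contra h
        have hmem : m ∈ bl f u :=
          mem_bl.mpr (lt_of_le_of_ne (hm u) (fun e => h (hfin e).symm))
        have := Finset.card_pos.mpr ⟨m, hmem⟩
        omega
      rw [hum]
      exact hbase'
    | succ n ih =>
      intro u hu
      by_cases hum : u = m
      · rw [hum]; exact hbase'
      · have hne : (bl f u).Nonempty :=
          ⟨m, mem_bl.mpr (lt_of_le_of_ne (hm u) (fun e => hum (hfin e).symm))⟩
        obtain ⟨p, hcons, hcard'⟩ := exists_pred hfin hne
        have ihp := ih p (by omega)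
        have hc' : Consec f' p u := by
          rcases key p u hcons with h | h
          · exact h
          · exfalso
            have hmem : u ∈ bl f' p := mem_bl.mpr h.1
            rw [← ihp] at hmem
            exact absurd (mem_bl.mp hmem) (not_lt.mpr hcons.1.le)
        rw [bl_insert hfin hcons, bl_insert hfin' hc', ihp]
  intro u v
  constructor
  · intro h
    have hmem : u ∈ bl f v := mem_bl.mpr h
    rw [step (bl f v).card v le_rfl] at hmem
    exact mem_bl.mp hmem
  · intro h
    have hmem : u ∈ bl f' v := mem_bl.mpr h
    rw [← step (bl f v).card v le_rfl] at hmem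
    exact mem_bl.mp hmem

end Aux

/-- the max-constrained book-embedding of a biconnected weighted graph is
unique up to a flip. -/
theorem max_be_unique_up_to_flip {V : Type*} [Fintype V]
    (G : SimpleGraph V) (ω : V → V → ℝ)
    (hsym : ∀ u v, ω u v = ω v u)
    (hpos : ∀ u v, G.Adj u v → 0 < ω u v)
    (hbi : IsBiconnected G)
    (f f' : V → ℝ) (hf : IsMaxBE G ω f) (hf' : IsMaxBE G ω f') :
    (∀ u v : V, f u < f v ↔ f' u < f' v) ∨
    (∀ u v : V, f u < f v ↔ f' v < f' u) := by
  classical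
  have hcard : 3 ≤ Fintype.card V := by
    rw [← Nat.card_eq_fintype_card]; exact hbi.1
  have : Nonempty V := Fintype.card_pos_iff.mp (by omega)
  have hne : (Finset.univ : Finset V).Nonempty := Finset.univ_nonempty
  obtain ⟨m, -, hm'⟩ := Finset.exists_min_image Finset.univ f hne
  obtain ⟨M, -, hM'⟩ := Finset.exists_max_image Finset.univ f hne
  obtain ⟨m', -, hm''⟩ := Finset.exists_min_image Finset.univ f' hne
  obtain ⟨M', -, hM''⟩ := Finset.exists_max_image Finset.univ f' hne
  have hm : IsMinOf f m := fun z => hm' z (Finset.mem_univ z)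
  have hM : IsMaxOf f M := fun z => hM' z (Finset.mem_univ z)
  have hm2 : IsMinOf f' m' := fun z => hm'' z (Finset.mem_univ z)
  have hM2 : IsMaxOf f' M' := fun z => hM'' z (Finset.mem_univ z)
  -- distinctness of extremes
  obtain ⟨a, b, hab⟩ := Fintype.exists_pair_of_one_lt_card (α := V) (by omega)
  have hmM : m ≠ M := by
    intro h
    apply hab
    apply hf.1.1
    have h1 := hm a; have h2 := hM a; have h3 := hm b; have h4 := hM b
    rw [h] at h1 h3
    linarith
  have hmM' : m' ≠ M' := by
    intro h
    apply hab
    apply hf'.1.1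
    have h1 := hm2 a; have h2 := hM2 a; have h3 := hm2 b; have h4 := hM2 b
    rw [h] at h1 h3
    linarith
  -- hinge edges
  have hGmM : G.Adj m M := min_max_adj hf.1.1 hf.1.2 hbi.2.1 hbi.2.2 hm hM hmM
  have hGmM' : G.Adj m' M' := min_max_adj hf'.1.1 hf'.1.2 hbi.2.1 hbi.2.2 hm2 hM2 hmM'
  -- the hinges coincide
  have hhinge : s(m, M) = s(m', M') := by
    by_contra h
    have h1 : ω m' M' < ω m M := hinge_max hsym hf hm hM hGmM hGmM' h
    have h2 : ω m M < ω m' M' := hinge_max hsym hf' hm2 hM2 hGmM' hGmM (Ne.symm h)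
    linarith
  rcases Sym2.eq_iff.mp hhinge with ⟨h1, h2⟩ | ⟨h1, h2⟩
  · left
    exact aux_same_min hsym hbi hf hf' hm (h1 ▸ hm2)
  · right
    have hf'' : IsMaxBE G ω (fun v => -(f' v)) := isMaxBE_neg hsym hf'
    have hm'' : IsMinOf (fun v => -(f' v)) m := by
      intro z
      simp only [neg_le_neg_iff]
      exact h1 ▸ hM2 z
    have := aux_same_min hsym hbi hf hf'' hm hm''
    intro u v
    rw [this u v]
    simp
end Schematic
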